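/- arXiv:1009.0060 — 3 statements merged into one kernel-verified Lean document; each statement's English description precedes it below -/
import Mathlib

section
/- Let L be any positive definite lattice and h ∈ O(L) an isometry satisfying h² + h + 1 = 0. Then K = M + N is isometric to the tensor product A_2 ⊗ L. -/
/-- If `h ∈ O(L)` satisfies `h² + h + 1 = 0`, then `K = M + N` is
isometric to `A₂ ⊗ L`.  Here `A₂ ⊗ L` is presented on the underlying group
`L × L` (via the basis `v₁, v₂` of `A₂`), with bilinear form
`((a,b),(c,d)) ↦ 2·B(a,c) - B(a,d) - B(b,c) + 2·B(b,d)`, i.e. the Kronecker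
product of the `A₂` Gram matrix `[[2,-1],[-1,2]]` with the form of `L`. -/
theorem stmt_7 {L : Type*} [AddCommGroup L] [Module ℤ L]
    (B : L →ₗ[ℤ] L →ₗ[ℤ] ℚ)
    (hsymm : ∀ x y : L, B x y = B y x)
    (hpos : ∀ x : L, x ≠ 0 → 0 < B x x)
    (h : L ≃ₗ[ℤ] L)
    (hisom : ∀ x y : L, B (h x) (h y) = B x y)
    (hcube : ∀ x : L, h (h x) + h x + x = 0)
    (M N K : Submodule ℤ (L × L))
    (hM : (M : Set (L × L)) = {p | ∃ x : L, p = (x, x)})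
    (hN : (N : Set (L × L)) = {p | ∃ x : L, p = (x, h x)})
    (hK : K = M ⊔ N) :
    ∃ e : K ≃ₗ[ℤ] L × L, ∀ v w : K,
      B (v : L × L).1 (w : L × L).1 + B (v : L × L).2 (w : L × L).2 =
        2 * B (e v).1 (e w).1 - B (e v).1 (e w).2 - B (e v).2 (e w).1 +
          2 * B (e v).2 (e w).2 := by
  classical
  subst hK
  -- h³ = 1
  have hcube3 : ∀ x : L, h (h (h x)) = x := by
    intro x
    have h1 := hcube (h x)
    have h2 := hcube x
    have h3 : h (h (h x)) - x
        = (h (h (h x)) + h (h x) + h x) - (h (h x) + h x + x) := by abel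
    rw [h1, h2, sub_zero] at h3
    exact sub_eq_zero.mp h3
  -- torsion-freeness from positivity
  have hzero : ∀ x : L, x + x + x = 0 → x = 0 := by
    intro x hx
    by_contra hxne
    have h9 : B (x + x + x) (x + x + x) = 9 * B x x := by
      simp only [map_add, LinearMap.add_apply]; ring
    rw [hx] at h9
    simp only [map_zero, LinearMap.zero_apply] at h9
    have := hpos x hxne
    nlinarith
  -- the linear map (a,b) ↦ (a + h b, a + h (h b))
  let f : L × L →ₗ[ℤ] L × L :=
    (AddMonoidHom.mk' (fun p => (p.1 + h p.2, p.1 + h (h p.2))) (by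
      intro p q
      simp only [Prod.fst_add, Prod.snd_add, map_add, Prod.mk_add_mk, Prod.mk.injEq]
      constructor <;> abel)).toIntLinearMap
  have hf_apply : ∀ p : L × L, f p = (p.1 + h p.2, p.1 + h (h p.2)) := fun p => rfl
  have hinj : Function.Injective f := by
    rw [← LinearMap.ker_eq_bot, LinearMap.ker_eq_bot']
    rintro ⟨a, b⟩ hab
    rw [hf_apply] at hab
    simp only [Prod.mk_eq_zero] at hab
    obtain ⟨h1, h2⟩ := hab
    have hb1 : h b = h (h b) := by
      have h3 : h b - h (h b) = (a + h b) - (a + h (h b)) := by abel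
      rw [h1, h2, sub_zero] at h3
      exact sub_eq_zero.mp h3
    have hb2 : b = h b := h.injective hb1
    have hb3 : b + b + b = 0 := by
      have h4 := hcube b
      rw [← hb2, ← hb2] at h4
      exact h4
    have hb0 : b = 0 := hzero b hb3
    have ha0 : a = 0 := by rw [hb0, map_zero, add_zero] at h1; exact h1
    simp [ha0, hb0]
  have hrange : M ⊔ N = LinearMap.range f := by
    apply le_antisymm
    · apply sup_le
      · intro z hz
        rw [← SetLike.mem_coe, hM] at hz
        obtain ⟨x, rfl⟩ := hz
        exact ⟨(x, 0), by rw [hf_apply]; simp⟩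
      · intro z hz
        rw [← SetLike.mem_coe, hN] at hz
        obtain ⟨y, rfl⟩ := hz
        refine ⟨(0, h (h y)), ?_⟩
        rw [hf_apply]
        simp [hcube3]
    · rintro z ⟨⟨a, b⟩, rfl⟩
      rw [hf_apply]
      have hm : ((a, a) : L × L) ∈ M := by
        rw [← SetLike.mem_coe, hM]; exact ⟨a, rfl⟩
      have hn : ((h b, h (h b)) : L × L) ∈ N := by
        rw [← SetLike.mem_coe, hN]; exact ⟨h b, rfl⟩
      have heq : ((a + h b, a + h (h b)) : L × L) = (a, a) + (h b, h (h b)) := by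
        simp [Prod.ext_iff]
      rw [heq]
      exact Submodule.add_mem _ (Submodule.mem_sup_left hm) (Submodule.mem_sup_right hn)
  let e : (M ⊔ N : Submodule ℤ (L × L)) ≃ₗ[ℤ] L × L :=
    (LinearEquiv.ofEq _ _ hrange).trans (LinearEquiv.ofInjective f hinj).symm
  have key : ∀ v : (M ⊔ N : Submodule ℤ (L × L)), f (e v) = (v : L × L) := by
    intro v
    have h2 := LinearEquiv.ofInjective_symm_apply (f := f) (h := hinj)
      ((LinearEquiv.ofEq _ _ hrange) v)
    simp only [e, LinearEquiv.trans_apply] at h2 ⊢; exact h2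
  -- key bilinear identity
  have hBsum : ∀ x y : L, B x (h y) + B x (h (h y)) = - B x y := by
    intro x y
    have h0 : B x (h (h y) + h y + y) = 0 := by rw [hcube y]; simp
    simp only [map_add] at h0
    linarith
  refine ⟨e, ?_⟩
  intro v w
  have hv : (v : L × L) = ((e v).1 + h (e v).2, (e v).1 + h (h (e v).2)) := by
    rw [← key v, hf_apply]
  have hw : (w : L × L) = ((e w).1 + h (e w).2, (e w).1 + h (h (e w).2)) := by
    rw [← key w, hf_apply]
  rw [hv, hw]
  set a := (e v).1; set b := (e v).2; set c := (e w).1; set d := (e w).2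
  simp only [map_add, LinearMap.add_apply]
  have e1 : B (h b) (h d) = B b d := hisom b d
  have e2 : B (h (h b)) (h (h d)) = B b d := by
    rw [hisom (h b) (h d), e1]
  have e3 : B a (h d) + B a (h (h d)) = - B a d := hBsum a d
  have e4 : B c (h b) + B c (h (h b)) = - B c b := hBsum c b
  have e5 : B (h b) c = B c (h b) := hsymm _ _
  have e6 : B (h (h b)) c = B c (h (h b)) := hsymm _ _
  have e7 : B c b = B b c := hsymm _ _
  linarith
end

section
/- Let L = Z² and let h be the reflection across the x-axis (h(e_1) = e_1, h(e_2) = -e_2). Then K = M + N is isometric to the rectangular lattice A_1³, i.e., √2·Z³. -/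
/-- The standard dot product on `ℤⁿ`. -/
def dot {n : ℕ} (x y : Fin n → ℤ) : ℤ := ∑ i, x i * y i

/-- The dot product on `ℤⁿ ⊥ ℤⁿ`. -/
def dot2 {n : ℕ} (x y : (Fin n → ℤ) × (Fin n → ℤ)) : ℤ := dot x.1 y.1 + dot x.2 y.2

/-- Auxiliary linear map `(a,p,q) ↦ ((a, p+q), (a, p−q))`. -/
def Gmap : (Fin 3 → ℤ) →ₗ[ℤ] (Fin 2 → ℤ) × (Fin 2 → ℤ) where
  toFun w := (![w 0, w 1 + w 2], ![w 0, w 1 - w 2])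
  map_add' x y := by
    refine Prod.ext ?_ ?_ <;> funext i <;> fin_cases i <;>
      simp [Matrix.cons_val_zero, Matrix.cons_val_one] <;> ring
  map_smul' c x := by
    refine Prod.ext ?_ ?_ <;> funext i <;> fin_cases i <;>
      simp [Matrix.cons_val_zero, Matrix.cons_val_one] <;> ring

/-- For `L = ℤ²` and `h` the reflection across the x-axis
(`h e₁ = e₁`, `h e₂ = -e₂`), the lattice `K = M + N` is isometric to the
rectangular lattice `A₁³ = √2·ℤ³`. -/
theorem stmt_8
    (h : (Fin 2 → ℤ) →ₗ[ℤ] (Fin 2 → ℤ))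
    (hh : ∀ x : Fin 2 → ℤ, h x = ![x 0, -x 1])
    (M N K : Submodule ℤ ((Fin 2 → ℤ) × (Fin 2 → ℤ)))
    (hM : M = LinearMap.range ((LinearMap.id : (Fin 2 → ℤ) →ₗ[ℤ] (Fin 2 → ℤ)).prod LinearMap.id))
    (hN : N = LinearMap.range ((LinearMap.id : (Fin 2 → ℤ) →ₗ[ℤ] (Fin 2 → ℤ)).prod h))
    (hK : K = M ⊔ N) :
    ∃ e : K ≃ₗ[ℤ] (Fin 3 → ℤ), ∀ v w : K,
      dot2 (v : (Fin 2 → ℤ) × (Fin 2 → ℤ)) (w : (Fin 2 → ℤ) × (Fin 2 → ℤ)) =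
        2 * dot (e v) (e w) := by
  subst hM hN hK
  have hmem : ∀ w : Fin 3 → ℤ, Gmap w ∈
      LinearMap.range ((LinearMap.id : (Fin 2 → ℤ) →ₗ[ℤ] (Fin 2 → ℤ)).prod LinearMap.id) ⊔
      LinearMap.range ((LinearMap.id : (Fin 2 → ℤ) →ₗ[ℤ] (Fin 2 → ℤ)).prod h) := by
    intro w
    refine Submodule.mem_sup.mpr
      ⟨(![w 0, w 1], ![w 0, w 1]), ⟨![w 0, w 1], rfl⟩,
       (![0, w 2], ![0, -w 2]), ⟨![0, w 2], ?_⟩, ?_⟩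
    · refine Prod.ext rfl ?_
      simp [LinearMap.prod_apply, hh]
    · refine Prod.ext ?_ ?_ <;> funext i <;> fin_cases i <;>
        simp [Gmap] <;> ring
  set g := Gmap.codRestrict _ hmem with hg
  have hinj : Function.Injective g := by
    intro a b hab
    have : Gmap a = Gmap b := congrArg Subtype.val hab
    have h1 : a 0 = b 0 := congrFun (congrArg Prod.fst this) 0
    have h2 : a 1 + a 2 = b 1 + b 2 := by
      have := congrFun (congrArg Prod.fst this) 1; simpa [Gmap] using this
    have h3 : a 1 - a 2 = b 1 - b 2 := by
      have := congrFun (congrArg Prod.snd this) 1; simpa [Gmap] using this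
    have e1 : a 1 = b 1 := by omega
    have e2 : a 2 = b 2 := by omega
    funext i; fin_cases i
    · exact h1
    · exact e1
    · exact e2
  have hsurj : Function.Surjective g := by
    rintro ⟨v, hv⟩
    rcases Submodule.mem_sup.mp hv with ⟨m, ⟨x, hx⟩, nn, ⟨y, hy⟩, hmn⟩
    refine ⟨![x 0 + y 0, x 1, y 1], Subtype.ext ?_⟩
    show Gmap ![x 0 + y 0, x 1, y 1] = v
    rw [← hmn, ← hx, ← hy]
    refine Prod.ext ?_ ?_ <;> funext i <;> fin_cases i <;>
      simp [Gmap, hh, Matrix.vecHead, Matrix.vecTail] <;> ring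
  refine ⟨(LinearEquiv.ofBijective g ⟨hinj, hsurj⟩).symm, ?_⟩
  intro v w
  set e := (LinearEquiv.ofBijective g ⟨hinj, hsurj⟩).symm with he
  have hv : (v : (Fin 2 → ℤ) × (Fin 2 → ℤ)) = Gmap (e v) := by
    have : g (e v) = v := (LinearEquiv.ofBijective g ⟨hinj, hsurj⟩).apply_symm_apply v
    exact (congrArg Subtype.val this).symm
  have hw : (w : (Fin 2 → ℤ) × (Fin 2 → ℤ)) = Gmap (e w) := by
    have : g (e w) = w := (LinearEquiv.ofBijective g ⟨hinj, hsurj⟩).apply_symm_apply w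
    exact (congrArg Subtype.val this).symm
  rw [hv, hw]
  simp [dot, dot2, Gmap, Fin.sum_univ_two, Fin.sum_univ_three]
  ring
end

section
/- Let L = A_2 with standard basis v_1, v_2 (norms 2, inner product -1), and let h be rotation by 60°: h(v_1) = v_1 + v_2, h(v_2) = -v_1. Then K = M + N equals the full lattice L ⊥ L. -/
/-- The `A₂` bilinear form in coordinates with respect to the standard basis
`v₁, v₂` (Gram matrix `[[2,-1],[-1,2]]`). -/
def A2form (x y : Fin 2 → ℤ) : ℤ :=
  2 * x 0 * y 0 - x 0 * y 1 - x 1 * y 0 + 2 * x 1 * y 1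

/-- For `L = A₂` (coordinates w.r.t. the basis `v₁, v₂`) and `h`
the rotation by 60° (`h v₁ = v₁ + v₂`, `h v₂ = -v₁`), the lattice `K = M + N`
is the full lattice `L ⊥ L`. -/
theorem stmt_10
    (h : (Fin 2 → ℤ) →ₗ[ℤ] (Fin 2 → ℤ))
    (hh : ∀ x : Fin 2 → ℤ, h x = ![x 0 - x 1, x 0])
    (hisom : ∀ x y : Fin 2 → ℤ, A2form (h x) (h y) = A2form x y)
    (M N K : Submodule ℤ ((Fin 2 → ℤ) × (Fin 2 → ℤ)))
    (hM : M = LinearMap.range ((LinearMap.id : (Fin 2 → ℤ) →ₗ[ℤ] (Fin 2 → ℤ)).prod LinearMap.id))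
    (hN : N = LinearMap.range ((LinearMap.id : (Fin 2 → ℤ) →ₗ[ℤ] (Fin 2 → ℤ)).prod h))
    (hK : K = M ⊔ N) :
    K = ⊤ := by
  subst hM hN hK
  rw [eq_top_iff]
  rintro ⟨a, b⟩ -
  set y : Fin 2 → ℤ := ![b 1 - a 1 + a 0 - b 0, a 0 - b 0] with hy
  rw [Submodule.mem_sup]
  refine ⟨(a - y, a - y), ⟨a - y, rfl⟩, (y, h y), ⟨y, rfl⟩, ?_⟩
  rw [hh y]
  refine Prod.ext ?_ ?_ <;> funext i <;> fin_cases i <;>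
    simp [hy, Matrix.vecHead, Matrix.vecTail] <;> ring
end
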